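/- Let k ≥ 1 be an integer, let G be a k-tree, and let K be any k-clique of G. Then every connected component of the graph G − K obtained by deleting the vertices of K contains exactly one vertex that is complete to K. -/

import Mathlib

open SimpleGraph

/-- The set of neighbors of `e i` among the earlier vertices `e j`, `j < i`. -/
def earlierNbrs {V : Type} (G : SimpleGraph V) {p : ℕ} (e : Fin p ≃ V) (i : Fin p) : Set V :=
  {v | ∃ j : Fin p, j < i ∧ v = e j ∧ G.Adj (e i) v}

/-- `e` is a `k`-simplicial ordering of the vertices of `G`. -/
def IsKSimplicialOrdering {V : Type} [Fintype V] (k : ℕ) (G : SimpleGraph V)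
    (e : Fin (Fintype.card V) ≃ V) : Prop :=
  G.IsClique (⇑e '' {i | (i : ℕ) < k}) ∧
  ∀ i : Fin (Fintype.card V), k ≤ (i : ℕ) →
    G.IsClique (earlierNbrs G e i) ∧ (earlierNbrs G e i).ncard = k

/-- A `k`-tree is a graph on at least `k` vertices admitting a `k`-simplicial ordering. -/
def IsKTree {V : Type} [Fintype V] (k : ℕ) (G : SimpleGraph V) : Prop :=
  k ≤ Fintype.card V ∧ ∃ e : Fin (Fintype.card V) ≃ V, IsKSimplicialOrdering k G e

namespace KTreeAux

/-- Reachability within the set `S`, avoiding the set `K`. -/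
def ReachIn {V : Type} (G : SimpleGraph V) (S K : Set V) : V → V → Prop :=
  Relation.ReflTransGen (fun a b => a ∈ S ∧ b ∈ S ∧ a ∉ K ∧ b ∉ K ∧ G.Adj a b)

lemma ReachIn.symm {V : Type} {G : SimpleGraph V} {S K : Set V} {u v : V}
    (h : ReachIn G S K u v) : ReachIn G S K v u :=
  @Std.Symm.symm _ _ (@Relation.ReflTransGen.stdSymm _
    (fun a b => a ∈ S ∧ b ∈ S ∧ a ∉ K ∧ b ∉ K ∧ G.Adj a b)
    ⟨fun _ _ h' => ⟨h'.2.1, h'.1, h'.2.2.2.1, h'.2.2.1, h'.2.2.2.2.symm⟩⟩) _ _ h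

/-- The first `m` vertices of the ordering `e`. -/
def Ae {V : Type} {p : ℕ} (e : Fin p ≃ V) (m : ℕ) : Set V := ⇑e '' {i | (i : ℕ) < m}

lemma Ae_mono {V : Type} {p : ℕ} (e : Fin p ≃ V) {m m' : ℕ} (h : m ≤ m') :
    Ae e m ⊆ Ae e m' :=
  Set.image_mono (fun _ hi => lt_of_lt_of_le hi h)

lemma Ae_ncard {V : Type} {p : ℕ} (e : Fin p ≃ V) {m : ℕ} (hm : m ≤ p) :
    (Ae e m).ncard = m := by
  have hr : Ae e m = Set.range (⇑e ∘ Fin.castLE hm) := by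
    ext v
    constructor
    · rintro ⟨j, hj, rfl⟩
      exact ⟨⟨(j : ℕ), hj⟩, congrArg e (Fin.ext rfl)⟩
    · rintro ⟨i, rfl⟩
      exact ⟨Fin.castLE hm i, i.isLt, rfl⟩
  rw [hr, ← Set.image_univ,
    Set.ncard_image_of_injective _ (e.injective.comp (Fin.castLE_injective hm)),
    Set.ncard_univ]
  simp

lemma reachIn_to_reachable {V : Type} {G : SimpleGraph V} {K : Set V} {u v : V}
    (h : ReachIn G Set.univ K u v) :
    ∀ (hu : u ∉ K) (hv : v ∉ K), (G.induce Kᶜ).Reachable ⟨u, hu⟩ ⟨v, hv⟩ := by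
  induction h with
  | refl => intro hu hv; exact Reachable.refl _
  | tail _ hbc ih =>
    intro hu hv
    obtain ⟨h1, h2, h3, h4, h5⟩ := hbc
    exact (ih hu h3).trans (SimpleGraph.Adj.reachable (by exact h5))

lemma reachable_to_reachIn {V : Type} {G : SimpleGraph V} {K : Set V} {u v : ↥Kᶜ}
    (h : (G.induce Kᶜ).Reachable u v) : ReachIn G Set.univ K u.val v.val := by
  obtain ⟨p⟩ := h
  induction p with
  | nil => exact Relation.ReflTransGen.refl
  | @cons a b c hadj p ih =>
    exact Relation.ReflTransGen.head ⟨trivial, trivial, a.2, b.2, hadj⟩ ih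

theorem main {V : Type} [Fintype V] (k : ℕ) (hk : 1 ≤ k) (G : SimpleGraph V)
    (e : Fin (Fintype.card V) ≃ V) (he : IsKSimplicialOrdering k G e) :
    ∀ m : ℕ, k ≤ m → m ≤ Fintype.card V →
      ∀ K : Set V, K ⊆ Ae e m → G.IsClique K → K.ncard = k →
      ∀ w : V, w ∈ Ae e m → w ∉ K →
      ∃! v : V, v ∈ Ae e m ∧ v ∉ K ∧ (∀ u ∈ K, G.Adj v u) ∧ ReachIn G (Ae e m) K w v := by
  intro m hkm
  induction m, hkm using Nat.le_induction with
  | base =>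
    intro hkp K hKsub _ hKcard w hwA hwK
    exfalso
    have hKA : K = Ae e k :=
      Set.eq_of_subset_of_ncard_le hKsub (by rw [Ae_ncard e hkp, hKcard])
    exact hwK (hKA ▸ hwA)
  | succ m hkm ih =>
    intro hm1 K hKsub hKclique hKcard w hwA hwK
    have hmp : m < Fintype.card V := hm1
    have hmp' : m ≤ Fintype.card V := le_of_lt hmp
    set i : Fin (Fintype.card V) := ⟨m, hmp⟩ with hi
    set x := e i with hx
    set N := earlierNbrs G e i with hN
    obtain ⟨hNclique, hNcard⟩ := he.2 i hkm
    have hNsub : N ⊆ Ae e m := by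
      rintro v ⟨j, hj, rfl, hadj⟩
      exact ⟨j, hj, rfl⟩
    have hxN : ∀ u, u ∈ Ae e m → G.Adj x u → u ∈ N := by
      rintro u ⟨j, hj, rfl⟩ hadj
      exact ⟨j, hj, rfl, hadj⟩
    have hA1 : Ae e (m + 1) = insert x (Ae e m) := by
      ext v
      constructor
      · rintro ⟨j, hj, rfl⟩
        rcases Nat.lt_succ_iff_lt_or_eq.mp hj with h | h
        · exact Or.inr ⟨j, h, rfl⟩
        · exact Or.inl (by rw [hx]; congr 1; exact Fin.ext h)
      · rintro (rfl | ⟨j, hj, rfl⟩)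
        · exact ⟨i, Nat.lt_succ_self m, rfl⟩
        · exact ⟨j, Nat.lt_succ_of_lt hj, rfl⟩
    have hsub : Ae e m ⊆ Ae e (m + 1) := Ae_mono e (Nat.le_succ m)
    have hmemA : ∀ v, v ∈ Ae e (m + 1) → v ≠ x → v ∈ Ae e m := by
      intro v hv hne
      rw [hA1] at hv
      rcases hv with rfl | h
      · exact absurd rfl hne
      · exact h
    have hxA1 : x ∈ Ae e (m + 1) := ⟨i, Nat.lt_succ_self m, rfl⟩
    have hadjN : ∀ a ∈ N, G.Adj x a := by rintro a ⟨j, hj, rfl, hadj⟩; exact hadj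
    have hxnotN : x ∉ N := fun h => G.irrefl (hadjN x h)
    -- the key lemma: transferring reachability at level m+1 down to level m
    have key : ∀ u v : V, ReachIn G (Ae e (m + 1)) K u v →
        (u ≠ x → v ≠ x → ReachIn G (Ae e m) K u v) ∧
        (u = x → v ≠ x → ∃ a, a ∈ N ∧ a ∉ K ∧ ReachIn G (Ae e m) K a v) ∧
        (u ≠ x → v = x → ∃ b, b ∈ N ∧ b ∉ K ∧ ReachIn G (Ae e m) K u b) := by
      intro u v h
      induction h using Relation.ReflTransGen.head_induction_on with
      | refl =>
        exact ⟨fun _ _ => Relation.ReflTransGen.refl,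
          fun h1 h2 => absurd h1 h2, fun h1 h2 => absurd h2 h1⟩
      | @head a c h' hcb IH =>
        obtain ⟨haA, hcA, haK, hcK, hadj⟩ := h'
        refine ⟨?_, ?_, ?_⟩
        · intro hax hvx
          have ham : a ∈ Ae e m := hmemA a haA hax
          by_cases hcx : c = x
          · have haN : a ∈ N := hxN a ham (hcx ▸ hadj).symm
            obtain ⟨b, hbN, hbK, hbreach⟩ := IH.2.1 hcx hvx
            by_cases hab : a = b
            · exact hab ▸ hbreach
            · exact Relation.ReflTransGen.head
                ⟨ham, hNsub hbN, haK, hbK, hNclique haN hbN hab⟩ hbreach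
          · exact Relation.ReflTransGen.head
              ⟨ham, hmemA c hcA hcx, haK, hcK, hadj⟩ (IH.1 hcx hvx)
        · intro hax hvx
          have hcx : c ≠ x := fun h => hadj.ne (hax.trans h.symm)
          have hcm := hmemA c hcA hcx
          have hcN : c ∈ N := hxN c hcm (hax ▸ hadj)
          exact ⟨c, hcN, hcK, IH.1 hcx hvx⟩
        · intro hax hvx
          have ham := hmemA a haA hax
          by_cases hcx : c = x
          · exact ⟨a, hxN a ham (hcx ▸ hadj).symm, haK, Relation.ReflTransGen.refl⟩
          · obtain ⟨b, hbN, hbK, hbr⟩ := IH.2.2 hcx hvx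
            exact ⟨b, hbN, hbK, Relation.ReflTransGen.head
              ⟨ham, hmemA c hcA hcx, haK, hcK, hadj⟩ hbr⟩
    by_cases hxK : x ∈ K
    · -- Case B : x ∈ K
      have hKx_sub : K \ {x} ⊆ N := by
        rintro u ⟨huK, hux⟩
        have hux' : u ≠ x := hux
        have huA : u ∈ Ae e m := hmemA u (hKsub huK) hux'
        exact hxN u huA (hKclique hxK huK (Ne.symm hux'))
      have hKfin : K.Finite := Set.toFinite K
      have hKxcard : (K \ {x}).ncard = k - 1 := by
        rw [Set.ncard_diff_singleton_of_mem hxK, hKcard]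
      have hdiff : (N \ (K \ {x})).ncard = 1 := by
        rw [Set.ncard_diff hKx_sub, hNcard, hKxcard]
        omega
      obtain ⟨y, hy⟩ := Set.ncard_eq_one.mp hdiff
      have hymem : y ∈ N \ (K \ {x}) := by rw [hy]; exact Set.mem_singleton y
      have hyN : y ∈ N := hymem.1
      have hyx : y ≠ x := fun h => hxnotN (h ▸ hyN)
      have hyK : y ∉ K := fun h => hymem.2 ⟨h, hyx⟩
      have hycomplete : ∀ u ∈ K, G.Adj y u := by
        intro u huK
        by_cases hux : u = x
        · exact hux ▸ (hadjN y hyN).symm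
        · have huN : u ∈ N := hKx_sub ⟨huK, hux⟩
          exact hNclique hyN huN (fun h => hyK (h ▸ huK))
      have huniqN : ∀ v', v' ∈ N → v' ∉ K → v' = y := by
        intro v' h1 h2
        have : v' ∈ N \ (K \ {x}) := ⟨h1, fun hc => h2 hc.1⟩
        rw [hy] at this
        exact this
      have hnotK : ∀ a, a ∈ Ae e m → a ∉ N → a ∉ K := by
        intro a haA haN haK
        have hax : a ≠ x := fun h => (h ▸ haA : x ∈ Ae e m).elim
          (fun j hj => absurd (e.injective hj.2.symm ▸ hj.1 : (i : ℕ) < m) (by simp [hi]))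
        exact haN (hKx_sub ⟨haK, hax⟩)
      have hwx : w ≠ x := fun h => hwK (h ▸ hxK)
      have hwm : w ∈ Ae e m := hmemA w hwA hwx
      have hreach_wy : ReachIn G (Ae e (m + 1)) K w y := by
        by_cases hwy : w = y
        · exact hwy ▸ Relation.ReflTransGen.refl
        · by_cases hwN : w ∈ N
          · exact absurd (huniqN w hwN hwK) hwy
          · obtain ⟨v₀, ⟨hv₀A, hv₀N, hv₀comp, hv₀reach⟩, -⟩ :=
              ih hmp' N hNsub hNclique hNcard w hwm hwN
            have hv₀K : v₀ ∉ K := hnotK v₀ hv₀A hv₀N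
            have conv : ReachIn G (Ae e (m + 1)) K w v₀ :=
              Relation.ReflTransGen.mono (fun a b hab =>
                ⟨hsub hab.1, hsub hab.2.1, hnotK a hab.1 hab.2.2.1,
                  hnotK b hab.2.1 hab.2.2.2.1, hab.2.2.2.2⟩) w v₀ hv₀reach
            exact conv.tail ⟨hsub hv₀A, hsub (hNsub hyN), hv₀K, hyK, hv₀comp y hyN⟩
      refine ⟨y, ⟨hsub (hNsub hyN), hyK, hycomplete, hreach_wy⟩, ?_⟩
      rintro v' ⟨hv'A, hv'K, hv'comp, -⟩
      have hv'x : v' ≠ x := fun h => hv'K (h ▸ hxK)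
      have hv'N : v' ∈ N := hxN v' (hmemA v' hv'A hv'x) (hv'comp x hxK).symm
      exact huniqN v' hv'N hv'K
    · -- Case A : x ∉ K
      have hKm : K ⊆ Ae e m := fun u hu => hmemA u (hKsub hu) (fun h => hxK (h ▸ hu))
      have hKsubN_of_comp : ∀ v', v' = x → (∀ u ∈ K, G.Adj v' u) → K = N := by
        intro v' hv'x hcomp
        have hsubN : K ⊆ N := fun u hu => hxN u (hKm hu) ((hv'x ▸ hcomp u hu).symm).symm
        exact Set.eq_of_subset_of_ncard_le hsubN (by rw [hNcard, hKcard])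
      by_cases hwx : w = x
      · by_cases hKN : K = N
        · refine ⟨x, ⟨hxA1, hxK, fun u hu => hadjN u (hKN ▸ hu), hwx ▸ Relation.ReflTransGen.refl⟩, ?_⟩
          rintro v' ⟨hv'A, hv'K, hv'comp, hv'reach⟩
          by_contra hne
          obtain ⟨a, haN, haK, -⟩ := (key w v' hv'reach).2.1 hwx hne
          exact haK (hKN ▸ haN)
        · have hnsub : ¬ N ⊆ K := fun h =>
            hKN (Set.eq_of_subset_of_ncard_le h (by rw [hKcard, hNcard])).symm
          obtain ⟨a, haN, haK⟩ := Set.not_subset.mp hnsub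
          have ham := hNsub haN
          obtain ⟨v, ⟨hvA, hvK, hvcomp, hvreach⟩, hvuniq⟩ :=
            ih hmp' K hKm hKclique hKcard a ham haK
          have hliftv : ReachIn G (Ae e (m + 1)) K a v :=
            Relation.ReflTransGen.mono (fun a' b' hab =>
              ⟨hsub hab.1, hsub hab.2.1, hab.2.2.1, hab.2.2.2.1, hab.2.2.2.2⟩) a v hvreach
          have hxreach : ReachIn G (Ae e (m + 1)) K x v :=
            Relation.ReflTransGen.head ⟨hxA1, hsub ham, hxK, haK, hadjN a haN⟩ hliftv
          refine ⟨v, ⟨hsub hvA, hvK, hvcomp, hwx ▸ hxreach⟩, ?_⟩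
          rintro v' ⟨hv'A, hv'K, hv'comp, hv'reach⟩
          by_cases hv'x : v' = x
          · exact absurd (hKsubN_of_comp v' hv'x hv'comp) hKN
          · obtain ⟨a', ha'N, ha'K, ha'reach⟩ := (key w v' hv'reach).2.1 hwx hv'x
            have hav' : ReachIn G (Ae e m) K a v' := by
              by_cases haa : a = a'
              · exact haa ▸ ha'reach
              · exact Relation.ReflTransGen.head
                  ⟨ham, hNsub ha'N, haK, ha'K, hNclique haN ha'N haa⟩ ha'reach
            exact hvuniq v' ⟨hmemA v' hv'A hv'x, hv'K, hv'comp, hav'⟩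
      · have hwm := hmemA w hwA hwx
        obtain ⟨v, ⟨hvA, hvK, hvcomp, hvreach⟩, hvuniq⟩ :=
          ih hmp' K hKm hKclique hKcard w hwm hwK
        have hliftv : ReachIn G (Ae e (m + 1)) K w v :=
          Relation.ReflTransGen.mono (fun a' b' hab =>
            ⟨hsub hab.1, hsub hab.2.1, hab.2.2.1, hab.2.2.2.1, hab.2.2.2.2⟩) w v hvreach
        refine ⟨v, ⟨hsub hvA, hvK, hvcomp, hliftv⟩, ?_⟩
        rintro v' ⟨hv'A, hv'K, hv'comp, hv'reach⟩
        by_cases hv'x : v' = x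
        · exfalso
          obtain ⟨b, hbN, hbK, -⟩ := (key w v' hv'reach).2.2 hwx hv'x
          exact hbK ((hKsubN_of_comp v' hv'x hv'comp) ▸ hbN)
        · exact hvuniq v' ⟨hmemA v' hv'A hv'x, hv'K, hv'comp, (key w v' hv'reach).1 hwx hv'x⟩

end KTreeAux

open KTreeAux in
/-- For any `k`-clique `K` of a `k`-tree `G` (`k ≥ 1`), every connected component of
`G - K` contains exactly one vertex that is complete to `K`. -/
theorem ktree_component_complete_vertex {V : Type} [Fintype V] (k : ℕ) (hk : 1 ≤ k)
    (G : SimpleGraph V) (hG : IsKTree k G)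
    (K : Set V) (hK : G.IsClique K) (hKcard : K.ncard = k) :
    ∀ C : (G.induce Kᶜ).ConnectedComponent,
      ∃! v : ↥Kᶜ, v ∈ C.supp ∧ ∀ u ∈ K, G.Adj ↑v u := by
  obtain ⟨hkcard, e, he⟩ := hG
  intro C
  obtain ⟨w, hwC⟩ := C.exists_rep
  have hAuniv : Ae e (Fintype.card V) = Set.univ := by
    ext v
    simp only [Set.mem_univ, iff_true]
    exact ⟨e.symm v, (e.symm v).isLt, e.apply_symm_apply v⟩
  have hwK : (w : V) ∉ K := w.2
  obtain ⟨v, ⟨hvA, hvK, hvcomp, hvreach⟩, hvuniq⟩ :=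
    main k hk G e he (Fintype.card V) hkcard le_rfl K
      (hAuniv ▸ Set.subset_univ K) hK hKcard (w : V) (by rw [hAuniv]; trivial) hwK
  have hvreach' : ReachIn G Set.univ K (w : V) v := hAuniv ▸ hvreach
  refine ⟨⟨v, hvK⟩, ⟨?_, hvcomp⟩, ?_⟩
  · rw [SimpleGraph.ConnectedComponent.mem_supp_iff, ← hwC]
    exact SimpleGraph.ConnectedComponent.sound
      ((reachIn_to_reachable hvreach' hwK hvK).symm)
  · rintro v' ⟨hv'C, hv'comp⟩
    rw [SimpleGraph.ConnectedComponent.mem_supp_iff, ← hwC] at hv'C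
    have hv'r : (G.induce Kᶜ).Reachable v' w := SimpleGraph.ConnectedComponent.eq.mp hv'C
    have hr : ReachIn G Set.univ K (w : V) (v' : V) :=
      (reachable_to_reachIn hv'r).symm
    have hr' : ReachIn G (Ae e (Fintype.card V)) K (w : V) (v' : V) := hAuniv ▸ hr
    exact Subtype.ext (hvuniq (v' : V)
      ⟨by rw [hAuniv]; trivial, v'.2, hv'comp, hr'⟩)
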